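/- Let G be a connected finite simple graph and let T_1, …, T_k (k ≥ 2) be spanning trees of G. (1) For every subset A ⊆ V(G) with |A| < k such that the graph G − A (the induced subgraph on V(G) \ A) is disconnected, at least one vertex of A belongs to I(T_1, …, T_k). (2) For every subset B ⊆ E(G) with |B| < k such that the graph G − B (obtained from G by deleting the edges of B) is disconnected, at least one edge of B belongs to E(T_1, …, T_k). -/
import Mathlib


open SimpleGraph

variable {V : Type*}

/-- `T` is a spanning tree of `G`: a subgraph on all of `V` that is connected and acyclic. -/
def IsSpanningTree (G T : SimpleGraph V) : Prop :=
  T ≤ G ∧ T.Connected ∧ T.IsAcyclic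

/-- The set of inner vertices of `T` (degree at least 2). -/
def innerSet (T : SimpleGraph V) : Set V :=
  {v | 2 ≤ (T.neighborSet v).ncard}

/-- Vertices that are inner vertices of at least two trees of the family. -/
def innerMulti {k : ℕ} (T : Fin k → SimpleGraph V) : Set V :=
  {v | ∃ i j : Fin k, i ≠ j ∧ v ∈ innerSet (T i) ∧ v ∈ innerSet (T j)}

/-- Edges that belong to at least two trees of the family. -/
def edgeMulti {k : ℕ} (T : Fin k → SimpleGraph V) : Set (Sym2 V) :=
  {e | ∃ i j : Fin k, i ≠ j ∧ e ∈ (T i).edgeSet ∧ e ∈ (T j).edgeSet}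

/-- A connected dominating set. -/
def IsConnDomSet (G : SimpleGraph V) (D : Set V) : Prop :=
  (G.induce D).Connected ∧ ∀ v ∉ D, ∃ w ∈ D, G.Adj v w

/-- A walk whose support lies in `s` gives reachability in the induced graph. -/
lemma reachable_induce_of_walk {G : SimpleGraph V} {s : Set V} {u v : V}
    (p : G.Walk u v) :
    ∀ (_ : ∀ w ∈ p.support, w ∈ s) (hu : u ∈ s) (hv : v ∈ s),
      (G.induce s).Reachable ⟨u, hu⟩ ⟨v, hv⟩ := by
  induction p with
  | nil => intro _ hu hv; exact Reachable.refl _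
  | @cons a b c h q ih =>
    intro hp hu hv
    have hb : b ∈ s := hp b (by simp)
    have hadj : (G.induce s).Adj ⟨a, hu⟩ ⟨b, hb⟩ := by
      simpa using h
    exact hadj.reachable.trans (ih (fun w hw => hp w (by simp [hw])) hb hv)

/-- Interior vertices of a path have at least two neighbors. -/
lemma two_le_ncard_neighborSet_of_interior [Finite V] {G : SimpleGraph V} {u v w : V}
    (p : G.Walk u v) (hp : p.IsPath) (hw : w ∈ p.support) (hwu : w ≠ u) (hwv : w ≠ v) :
    2 ≤ (G.neighborSet w).ncard := by
  classical
  set q := p.takeUntil w hw with hqdef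
  set r := p.dropUntil w hw with hrdef
  have hqr : q.append r = p := p.take_spec hw
  have hq : ¬ q.reverse.Nil := Walk.not_nil_of_ne hwu
  have hr : ¬ r.Nil := Walk.not_nil_of_ne hwv
  obtain ⟨x, hx, q', hq'⟩ := Walk.not_nil_iff.mp hq
  obtain ⟨y, hy, r', hr'⟩ := Walk.not_nil_iff.mp hr
  have hxq : x ∈ q.support := by
    have h1 : x ∈ q.reverse.support := by
      rw [hq', Walk.support_cons]
      exact List.mem_cons_of_mem _ q'.start_mem_support
    rw [Walk.support_reverse] at h1
    exact List.mem_reverse.mp h1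
  have hyr : y ∈ r.support.tail := by
    rw [hr', Walk.support_cons]
    exact r'.start_mem_support
  have hnd : (q.support ++ r.support.tail).Nodup := by
    have h2 := hp.support_nodup
    rw [← hqr, Walk.support_append] at h2
    exact h2
  have hxy : x ≠ y := by
    rintro rfl
    exact (List.disjoint_of_nodup_append hnd) hxq hyr
  have h3 : 1 < (G.neighborSet w).ncard := by
    rw [Set.one_lt_ncard_iff (Set.toFinite _)]
    exact ⟨x, y, hx, hy, hxy⟩
  omega

/-- Pigeonhole: an injection from `Fin k` into a set forces `k ≤` its cardinality. -/
lemma le_ncard_of_inj {α : Type*} [Finite α] {k : ℕ} {A : Set α} (f : Fin k → α)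
    (hf : Function.Injective f) (hsub : ∀ i, f i ∈ A) : k ≤ A.ncard := by
  have h1 : Set.range f ⊆ A := by rintro _ ⟨i, rfl⟩; exact hsub i
  have h2 : (Set.range f).ncard = k := by
    rw [← Set.image_univ, Set.ncard_image_of_injective _ hf, Set.ncard_univ,
      Nat.card_eq_fintype_card, Fintype.card_fin]
  calc k = (Set.range f).ncard := h2.symm
    _ ≤ A.ncard := Set.ncard_le_ncard h1 A.toFinite

/-- Any vertex cut of size `< k` contains a vertex of `I(T₁, …, T_k)`, and any edge cut
of size `< k` contains an edge of `E(T₁, …, T_k)`. -/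
theorem cut_meets_shared [Fintype V] (G : SimpleGraph V) (hG : G.Connected)
    (k : ℕ) (hk : 2 ≤ k) (T : Fin k → SimpleGraph V)
    (hT : ∀ i, IsSpanningTree G (T i)) :
    (∀ A : Set V, A.ncard < k → (Aᶜ : Set V).Nonempty →
      ¬ (G.induce (Aᶜ : Set V)).Connected → ∃ a ∈ A, a ∈ innerMulti T) ∧
    (∀ B : Set (Sym2 V), B ⊆ G.edgeSet → B.ncard < k →
      ¬ (G.deleteEdges B).Connected → ∃ e ∈ B, e ∈ edgeMulti T) := by
  classical
  constructor
  · -- vertex version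
    intro A hA hne hdis
    by_contra hcon
    push_neg at hcon
    -- there is a tree in which no vertex of A is inner
    have hexists : ∃ i : Fin k, ∀ a ∈ A, a ∉ innerSet (T i) := by
      by_contra h
      push_neg at h
      choose f hfA hfI using h
      have hinj : Function.Injective f := by
        intro i j hij
        by_contra hne'
        exact hcon (f i) (hfA i) ⟨i, j, hne', hfI i, hij ▸ hfI j⟩
      exact absurd (le_ncard_of_inj f hinj hfA) (not_le.mpr hA)
    obtain ⟨i, hi⟩ := hexists
    apply hdis
    haveI : Nonempty (↥(Aᶜ : Set V)) := ⟨⟨hne.choose, hne.choose_spec⟩⟩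
    refine Connected.mk ?_
    rintro ⟨u, hu⟩ ⟨v, hv⟩
    obtain ⟨p⟩ := (hT i).2.1.preconnected u v
    set p' : (T i).Walk u v := (p.toPath : (T i).Walk u v)
    have hp' : p'.IsPath := p.toPath.2
    have hsupp : ∀ w ∈ p'.support, w ∈ (Aᶜ : Set V) := by
      intro w hw
      by_cases hwu : w = u
      · rwa [hwu]
      by_cases hwv : w = v
      · rwa [hwv]
      intro hwA
      exact hi w hwA (two_le_ncard_neighborSet_of_interior p' hp' hw hwu hwv)
    have hreach := reachable_induce_of_walk p' hsupp hu hv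
    exact hreach.mono (fun a b hab => (hT i).1 hab)
  · -- edge version
    intro B hBsub hB hdis
    by_contra hcon
    push_neg at hcon
    have hexists : ∃ i : Fin k, ∀ e ∈ B, e ∉ (T i).edgeSet := by
      by_contra h
      push_neg at h
      choose f hfB hfE using h
      have hinj : Function.Injective f := by
        intro i j hij
        by_contra hne'
        exact hcon (f i) (hfB i) ⟨i, j, hne', hfE i, hij ▸ hfE j⟩
      exact absurd (le_ncard_of_inj f hinj hfB) (not_le.mpr hB)
    obtain ⟨i, hi⟩ := hexists
    apply hdis
    have hle : T i ≤ G.deleteEdges B := by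
      intro a b hab
      rw [deleteEdges_adj]
      exact ⟨(hT i).1 hab, fun hmem => hi _ hmem hab⟩
    exact (hT i).2.1.mono hle
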